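/- arXiv:2208.04778 — 5 statements merged into one kernel-verified Lean document; each statement's English description precedes it below -/
import Mathlib

section
/- Let X be a proper geodesic metric space with basepoint o and let τ : [0,∞) → X be a geodesic ray. Suppose that for every θ > 0 there is R₀ > 0 such that for all R ≥ R₀: whenever x, y ∈ X satisfy d(x,y) ≤ d(x, im τ) and ‖x‖ ≤ R, then diam(π_τ(x) ∪ π_τ(y)) ≤ θR. Then there exists a sublinear function κ such that the image of τ is κ-contracting. -/
open Metric Set Filter

/-- A map `γ` is a (unit-speed) geodesic on the interval `I ⊆ ℝ`:
`I` is order-connected (an interval) and `γ` is an isometric embedding of `I`. -/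
def IsGeodesicOn {X : Type*} [MetricSpace X] (γ : ℝ → X) (I : Set ℝ) : Prop :=
  I.OrdConnected ∧ ∀ s ∈ I, ∀ t ∈ I, dist (γ s) (γ t) = |s - t|

/-- `X` is a geodesic metric space: any two points are joined by a geodesic segment. -/
def GeodesicSpace (X : Type*) [MetricSpace X] : Prop :=
  ∀ x y : X, ∃ γ : ℝ → X, γ 0 = x ∧ γ (dist x y) = y ∧
    ∀ s ∈ Set.Icc 0 (dist x y), ∀ t ∈ Set.Icc 0 (dist x y), dist (γ s) (γ t) = |s - t|

/-- The set of nearest-point projections of `x` to `Z`. -/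
def projSet {X : Type*} [MetricSpace X] (Z : Set X) (x : X) : Set X :=
  {y | y ∈ Z ∧ dist x y = Metric.infDist x Z}

/-- A subset `Z ⊆ X` is `N`-contracting: whenever `d(x,y) < d(x,Z)`, any two
nearest-point projections of `x` and `y` to `Z` are at distance at most `N`. -/
def IsContractingSet {X : Type*} [MetricSpace X] (N : ℝ) (Z : Set X) : Prop :=
  ∀ x y : X, dist x y < Metric.infDist x Z →
    ∀ p ∈ projSet Z x, ∀ q ∈ projSet Z y, dist p q ≤ N

/-- A geodesic ray: an isometric embedding of `[0,∞)`. -/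
def IsGeodesicRay {X : Type*} [MetricSpace X] (τ : ℝ → X) : Prop :=
  ∀ s ∈ Set.Ici (0:ℝ), ∀ t ∈ Set.Ici (0:ℝ), dist (τ s) (τ t) = |s - t|

/-- The geodesic ray `τ` is `(N,C)`-frequently contracting. -/
def FreqContracting {X : Type*} [MetricSpace X] (N C : ℝ) (τ : ℝ → X) : Prop :=
  ∀ L > (0:ℝ), ∀ θ ∈ Set.Ioo (0:ℝ) 1, ∃ R₀ > (0:ℝ),
    ∀ R > R₀, ∀ t : ℝ, 0 < t → t < (1 - θ) * R →
      ∃ s : ℝ, Set.Icc (s - L) (s + L) ⊆ Set.Icc t (t + θ * R) ∧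
        ∃ (γ : ℝ → X) (I : Set ℝ), IsGeodesicOn γ I ∧ IsContractingSet N (γ '' I) ∧
          ∀ u ∈ Set.Icc (s - L) (s + L), Metric.infDist (τ u) (γ '' I) ≤ C

/-- A sublinear function: monotone increasing, concave, `≥ 1`, and `κ(t)/t → 0`. -/
def IsSublinear (κ : ℝ → ℝ) : Prop :=
  MonotoneOn κ (Set.Ici 0) ∧ ConcaveOn ℝ (Set.Ici 0) κ ∧ (∀ t : ℝ, 0 ≤ t → 1 ≤ κ t) ∧
    Filter.Tendsto (fun t => κ t / t) Filter.atTop (nhds 0)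

/-- `Z` is `κ`-contracting (with respect to the basepoint `o`). -/
def IsKappaContracting {X : Type*} [MetricSpace X] (o : X) (κ : ℝ → ℝ) (Z : Set X) : Prop :=
  ∃ c > (0:ℝ), ∀ x y : X, dist x y ≤ Metric.infDist x Z →
    Metric.diam (projSet Z x ∪ projSet Z y) ≤ c * κ (dist o x)

/-- If projections to a geodesic ray `τ` of pairs of points `x, y` with
`d(x,y) ≤ d(x, im τ)` and `‖x‖ ≤ R` have diameter at most `θR` for every `θ > 0` and all
large `R`, then `τ` is `κ`-contracting for some sublinear function `κ`. -/
theorem small_linear_projections_implies_sublinearly_contracting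
    {X : Type*} [MetricSpace X] [ProperSpace X] (hgeo : GeodesicSpace X)
    (o : X) (τ : ℝ → X) (hτo : τ 0 = o) (hray : IsGeodesicRay τ)
    (h : ∀ θ > (0:ℝ), ∃ R₀ > (0:ℝ), ∀ R ≥ R₀, ∀ x y : X,
      dist x y ≤ Metric.infDist x (τ '' Set.Ici 0) → dist o x ≤ R →
        Metric.diam (projSet (τ '' Set.Ici 0) x ∪ projSet (τ '' Set.Ici 0) y) ≤ θ * R) :
    ∃ κ : ℝ → ℝ, IsSublinear κ ∧ IsKappaContracting o κ (τ '' Set.Ici 0) := by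
  -- Choose R₀ for each θ = 1/(n+1)
  have hpos : ∀ n : ℕ, (0:ℝ) < 1 / (n+1) := by
    intro n; positivity
  choose R hRpos hR using fun n : ℕ => h (1/(n+1)) (hpos n)
  set f : ℕ → ℝ → ℝ := fun n t => t / (n+1) + R n / (n+1) + 1 with hf
  have hfbdd : ∀ t : ℝ, BddBelow (Set.range fun n => f n t) := by
    intro t
    refine ⟨1 - |t|, ?_⟩
    rintro _ ⟨n, rfl⟩
    have h1 : (1:ℝ) ≤ (n:ℝ)+1 := by exact_mod_cast Nat.succ_le_succ (Nat.zero_le n)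
    have h2 : |t / (n+1)| ≤ |t| := by
      rw [abs_div]
      rw [abs_of_pos (show (0:ℝ) < (n:ℝ)+1 by linarith)]
      calc |t| / ((n:ℝ)+1) ≤ |t| / 1 := by
            apply div_le_div_of_nonneg_left (abs_nonneg t) one_pos h1 |>.trans_eq rfl
        _ = |t| := div_one _
    have h3 : -|t| ≤ t / (n+1) := (abs_le.mp h2).1.trans' (by linarith [neg_abs_le t])
    have h4 : (0:ℝ) ≤ R n / (n+1) := le_of_lt (div_pos (hRpos n) (by linarith))
    simp only [hf]
    linarith [(abs_le.mp h2).1]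
  set κ : ℝ → ℝ := fun t => ⨅ n : ℕ, f n t with hκ
  have hκle : ∀ t : ℝ, ∀ n : ℕ, κ t ≤ f n t := fun t n => ciInf_le (hfbdd t) n
  have hκge : ∀ t : ℝ, 0 ≤ t → 1 ≤ κ t := by
    intro t ht
    refine le_ciInf fun n => ?_
    have h4 : (0:ℝ) ≤ R n / (n+1) := le_of_lt (div_pos (hRpos n) (by positivity))
    have h5 : (0:ℝ) ≤ t / (n+1) := by positivity
    simp only [hf]; linarith
  refine ⟨κ, ⟨?_, ?_, hκge, ?_⟩, 1, one_pos, ?_⟩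
  · -- MonotoneOn
    intro s hs t ht hst
    refine le_ciInf fun n => (hκle s n).trans ?_
    simp only [hf]
    have : s / ((n:ℝ)+1) ≤ t / ((n:ℝ)+1) := by
      apply div_le_div_of_nonneg_right hst ?_ |>.trans_eq rfl
      positivity
    linarith
  · -- ConcaveOn
    refine ⟨convex_Ici 0, ?_⟩
    intro x hx y hy p q hp hq hpq
    refine le_ciInf fun n => ?_
    have h1 := hκle x n
    have h2 := hκle y n
    have : p • κ x + q • κ y ≤ p * f n x + q * f n y := by
      simp only [smul_eq_mul]
      gcongr
    refine this.trans (le_of_eq ?_)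
    simp only [hf, smul_eq_mul]
    field_simp
    linear_combination (1 + R n + (n:ℝ)) * hpq
  · -- Tendsto κ t / t → 0
    rw [Metric.tendsto_atTop]
    intro ε hε
    obtain ⟨n, hn⟩ := exists_nat_gt (2/ε)
    have hn1 : (0:ℝ) < (n:ℝ)+1 := by positivity
    have han : 1/((n:ℝ)+1) < ε/2 := by
      rw [div_lt_div_iff₀ hn1 two_pos]
      have h2' : 2/ε < (n:ℝ)+1 := by linarith
      have h2 : (2/ε)*ε < ((n:ℝ)+1)*ε := mul_lt_mul_of_pos_right h2' hε
      rw [div_mul_cancel₀ 2 hε.ne'] at h2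
      linarith
    set B := R n / (n+1) + 1 with hB
    have hBpos : 0 < B := by
      have : (0:ℝ) < R n / (n+1) := div_pos (hRpos n) hn1
      rw [hB]; linarith
    refine ⟨max 1 (2*B/ε), fun t ht => ?_⟩
    have ht1 : (1:ℝ) ≤ t := le_of_max_le_left ht
    have ht0 : (0:ℝ) < t := lt_of_lt_of_le one_pos ht1
    have ht2 : 2*B/ε ≤ t := le_of_max_le_right ht
    have hκt0 : 0 ≤ κ t := le_trans zero_le_one (hκge t ht0.le)
    rw [Real.dist_eq, sub_zero, abs_of_nonneg (by positivity)]
    have hup : κ t / t ≤ 1/((n:ℝ)+1) + B/t := by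
      have := hκle t n
      rw [div_le_iff₀ ht0]
      simp only [hf] at this
      have hBt : B/t * t = B := div_mul_cancel₀ B ht0.ne'
      have h1t : t/((n:ℝ)+1) = 1/((n:ℝ)+1) * t := by ring
      calc κ t ≤ t/((n:ℝ)+1) + R n/((n:ℝ)+1) + 1 := this
        _ = 1/((n:ℝ)+1) * t + B := by rw [hB]; ring
        _ = (1/((n:ℝ)+1) + B/t) * t := by rw [add_mul, hBt]
    have hBt2 : B/t ≤ ε/2 := by
      rw [div_le_iff₀ ht0]
      have : 2*B/ε * ε ≤ t * ε := mul_le_mul_of_nonneg_right ht2 hε.le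
      have h2B : 2*B/ε * ε = 2*B := div_mul_cancel₀ (2*B) hε.ne'
      rw [h2B] at this
      linarith [mul_le_mul_of_nonneg_right ht2 hε.le]
    linarith
  · -- The contraction estimate
    intro x y hxy
    rw [one_mul]
    refine le_ciInf fun n => ?_
    set T := max (R n) (dist o x) with hT
    have hTR : R n ≤ T := le_max_left _ _
    have hTx : dist o x ≤ T := le_max_right _ _
    have := hR n T hTR x y hxy hTx
    refine this.trans ?_
    simp only [hf]
    have hd : (0:ℝ) ≤ dist o x := dist_nonneg
    have : 1/((n:ℝ)+1) * T ≤ 1/((n:ℝ)+1) * (R n + dist o x) := by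
      apply mul_le_mul_of_nonneg_left ?_ (by positivity)
      exact max_le (by linarith) (by linarith [hRpos n])
    refine this.trans ?_
    have : 1/((n:ℝ)+1) * (R n + dist o x) = dist o x/((n:ℝ)+1) + R n/((n:ℝ)+1) := by ring
    rw [this]
    linarith
end

section
/- Let X be a proper geodesic metric space with basepoint o, let κ be a sublinear function, and let β : [0,∞) → X be a quasi-geodesic ray with β(0) = o whose image is κ-contracting. Then the image of β is weakly κ-Morse: there is a function m : (0,∞)² → (0,∞) such that every (q,Q)-quasi-geodesic segment with both endpoints on the image of β is contained in the (κ, m(q,Q))-neighbourhood of the image of β. -/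
open Metric Set Filter

/-- A `(q,Q)`-quasi-geodesic on the set `I ⊆ ℝ`: continuous and bi-Lipschitz up to
additive error. -/
def IsQuasiGeodesicOn {X : Type*} [MetricSpace X] (q Q : ℝ) (η : ℝ → X) (I : Set ℝ) : Prop :=
  ContinuousOn η I ∧ ∀ s ∈ I, ∀ t ∈ I,
    |s - t| / q - Q ≤ dist (η s) (η t) ∧ dist (η s) (η t) ≤ q * |s - t| + Q


set_option maxHeartbeats 4000000

lemma kappa_subadd {κ : ℝ → ℝ} (hκ : IsSublinear κ) {x y : ℝ} (hx : 0 ≤ x) (hy : 0 ≤ y) :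
    κ (x + y) ≤ κ x + κ y := by
  rcases eq_or_lt_of_le (by positivity : (0:ℝ) ≤ x + y) with h0 | hpos
  · have hx0 : x = 0 := by linarith [hx, hy, h0.symm ▸ (rfl : x + y = x + y)]
    have hy0 : y = 0 := by linarith
    subst hx0; subst hy0
    simp only [add_zero]
    linarith [hκ.2.2.1 0 le_rfl]
  · have hcon := hκ.2.1
    have hmem : (x+y) ∈ Set.Ici (0:ℝ) := Set.mem_Ici.2 (by positivity)
    have hne : x + y ≠ 0 := ne_of_gt hpos
    have h1 := hcon.2 (Set.self_mem_Ici) hmem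
      (show (0:ℝ) ≤ y/(x+y) by positivity) (show (0:ℝ) ≤ x/(x+y) by positivity)
      (show y/(x+y) + x/(x+y) = 1 by field_simp; ring)
    have h2 := hcon.2 (Set.self_mem_Ici) hmem
      (show (0:ℝ) ≤ x/(x+y) by positivity) (show (0:ℝ) ≤ y/(x+y) by positivity)
      (show x/(x+y) + y/(x+y) = 1 by field_simp)
    simp only [smul_eq_mul] at h1 h2
    have e1 : (y/(x+y)) * 0 + (x/(x+y)) * (x+y) = x := by field_simp; ring
    have e2 : (x/(x+y)) * 0 + (y/(x+y)) * (x+y) = y := by field_simp; ring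
    rw [e1] at h1
    rw [e2] at h2
    have hκ0 : 0 ≤ κ 0 := le_trans zero_le_one (hκ.2.2.1 0 le_rfl)
    have hsum := add_le_add h1 h2
    have he : y / (x + y) * κ 0 + x / (x + y) * κ (x + y) + (x / (x + y) * κ 0 + y / (x + y) * κ (x + y)) = κ 0 + κ (x+y) := by
      field_simp
      ring
    rw [he] at hsum
    linarith


lemma kappa_lin {κ : ℝ → ℝ} (hκ : IsSublinear κ) {ε : ℝ} (hε : 0 < ε) :
    ∃ C : ℝ, 1 ≤ C ∧ ∀ x : ℝ, 0 ≤ x → κ x ≤ ε * x + C := by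
  have := (hκ.2.2.2.eventually_lt_const hε)
  rw [Filter.eventually_atTop] at this
  obtain ⟨T, hT⟩ := this
  set T' := max T 1 with hT'
  refine ⟨κ T', le_trans (hκ.2.2.1 T' (by positivity)) le_rfl, fun x hx => ?_⟩
  rcases le_or_gt x T' with h | h
  · have := hκ.1 (Set.mem_Ici.2 hx) (Set.mem_Ici.2 (by positivity : (0:ℝ) ≤ T')) h
    nlinarith
  · have hx' : T ≤ x := le_trans (le_max_left _ _) h.le
    have := hT x hx'
    have hxpos : (0:ℝ) < x := lt_of_lt_of_le (by positivity) h.le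
    have : κ x < ε * x := by
      rw [div_lt_iff₀ hxpos] at this; linarith
    have hC : 0 ≤ κ T' := le_trans zero_le_one (hκ.2.2.1 T' (by positivity))
    linarith


lemma kappa_cont {κ : ℝ → ℝ} (hκ : IsSublinear κ) : ContinuousOn κ (Set.Ioi 0) := by
  have h1 : ConcaveOn ℝ (Set.Ioi 0) κ := hκ.2.1.subset (Set.Ioi_subset_Ici le_rfl) (convex_Ioi 0)
  have h2 : ConvexOn ℝ (Set.Ioi 0) (-κ) := h1.neg
  have := ConvexOn.continuousOn isOpen_Ioi h2
  have : ContinuousOn (fun x => -(-κ x)) (Set.Ioi 0) := (this.neg)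
  simpa using this

lemma qg_image_closed {X : Type*} [MetricSpace X] [ProperSpace X]
    {q₀ Q₀ : ℝ} (hq₀ : 1 ≤ q₀) (β : ℝ → X) (hβ : IsQuasiGeodesicOn q₀ Q₀ β (Set.Ici 0)) :
    IsClosed (β '' Set.Ici 0) := by
  have hq₀' : (0:ℝ) < q₀ := lt_of_lt_of_le zero_lt_one hq₀
  rw [← isSeqClosed_iff_isClosed]
  intro z x hz hzx
  choose t ht hβt using hz
  have hzx' := hzx
  rw [Metric.tendsto_atTop] at hzx
  obtain ⟨N, hN⟩ := hzx 1 zero_lt_one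
  set T := q₀ * (dist x (β 0) + 1 + Q₀) with hT
  have htb : ∀ n, t (n + N) ∈ Set.Icc (0:ℝ) T := by
    intro n
    refine ⟨ht _, ?_⟩
    have h1 := (hβ.2 (t (n+N)) (ht _) 0 Set.self_mem_Ici).1
    have h2 : dist (β (t (n+N))) (β 0) ≤ dist (z (n+N)) x + dist x (β 0) := by
      rw [hβt]
      exact dist_triangle _ _ _
    have h3 : dist (z (n+N)) x < 1 := hN _ (Nat.le_add_left _ _)
    have h4 : |t (n+N) - 0| = t (n+N) := by rw [sub_zero, abs_of_nonneg (ht _)]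
    rw [h4] at h1
    have : t (n+N) / q₀ - Q₀ ≤ dist x (β 0) + 1 := by linarith
    rw [div_sub' (ne_of_gt hq₀'), div_le_iff₀ hq₀'] at this
    nlinarith
  obtain ⟨s, hs, φ, hφ, hws⟩ := (isCompact_Icc (a := (0:ℝ)) (b := T)).tendsto_subseq htb
  refine ⟨s, Set.mem_Ici.2 hs.1, ?_⟩
  have hcont : ContinuousWithinAt β (Set.Ici 0) s := hβ.1 s (Set.mem_Ici.2 hs.1)
  have hmem : ∀ n, t (φ n + N) ∈ Set.Ici (0:ℝ) := fun n => ht _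
  have h5 : Filter.Tendsto (fun n => t (φ n + N)) Filter.atTop (nhdsWithin s (Set.Ici 0)) :=
    tendsto_nhdsWithin_of_tendsto_nhds_of_eventually_within _ hws (Filter.Eventually.of_forall hmem)
  have h6 : Filter.Tendsto (fun n => β (t (φ n + N))) Filter.atTop (nhds (β s)) :=
    hcont.tendsto.comp h5
  have hφN : Filter.Tendsto (fun n => φ n + N) Filter.atTop Filter.atTop :=
    tendsto_atTop_mono (fun n => le_trans hφ.le_apply (Nat.le_add_right _ _)) tendsto_id
  have h7 : Filter.Tendsto (fun n => z (φ n + N)) Filter.atTop (nhds x) := hzx'.comp hφN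
  have he : (fun n => β (t (φ n + N))) = fun n => z (φ n + N) := funext fun n => hβt _
  rw [he] at h6
  exact tendsto_nhds_unique h6 h7

lemma main_aux {X : Type*} [MetricSpace X] [ProperSpace X]
    (o : X) (κ : ℝ → ℝ) (hκ : IsSublinear κ) (Z : Set X)
    (hZcl : IsClosed Z) (hoZ : o ∈ Z)
    (c : ℝ) (hc : 0 < c)
    (hcd : ∀ x y : X, dist x y ≤ Metric.infDist x Z →
      Metric.diam (projSet Z x ∪ projSet Z y) ≤ c * κ (dist o x))
    (q Q : ℝ) (hq : 1 ≤ q) (hQ : 0 ≤ Q) :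
    ∃ M : ℝ, 0 < M ∧ ∀ (η : ℝ → X) (a b : ℝ), a ≤ b → IsQuasiGeodesicOn q Q η (Set.Icc a b) →
      η a ∈ Z → η b ∈ Z → ∀ t ∈ Set.Icc a b,
        Metric.infDist (η t) Z ≤ M * κ (dist o (η t)) := by
  classical
  have hq0 : (0:ℝ) < q := lt_of_lt_of_le zero_lt_one hq
  have hZne : Z.Nonempty := ⟨o, hoZ⟩
  have hκ1 : ∀ x : ℝ, 0 ≤ x → 1 ≤ κ x := hκ.2.2.1
  have hκmono := hκ.1
  -- projection choice function
  have hprojex : ∀ x : X, ∃ p, p ∈ projSet Z x := by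
    intro x
    obtain ⟨y, hy, hyd⟩ := hZcl.exists_infDist_eq_dist hZne x
    exact ⟨y, hy, hyd.symm⟩
  choose φp hφp using hprojex
  have hpair : ∀ x y : X, dist x y ≤ Metric.infDist x Z →
      dist (φp x) (φp y) ≤ c * κ (dist o x) := by
    intro x y hxy
    have hbx : Bornology.IsBounded (projSet Z x ∪ projSet Z y) := by
      apply Bornology.IsBounded.union
      · exact (Metric.isBounded_closedBall (x := x) (r := Metric.infDist x Z)).subset
          (fun p hp => by rw [Metric.mem_closedBall, dist_comm]; exact le_of_eq hp.2)
      · exact (Metric.isBounded_closedBall (x := y) (r := Metric.infDist y Z)).subset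
          (fun p hp => by rw [Metric.mem_closedBall, dist_comm]; exact le_of_eq hp.2)
    exact le_trans (Metric.dist_le_diam_of_mem hbx (Set.mem_union_left _ (hφp x))
      (Set.mem_union_right _ (hφp y))) (hcd x y hxy)
  -- constants
  set R₀ : ℝ := 8*c*q^2*(Q+1) + 2*Q + 2 with hR₀
  clear_value R₀
  have h8 : 0 ≤ 8*c*q^2*(Q+1) := by positivity
  have hq2 : 1 ≤ q^2 := by nlinarith
  have hR₀2 : 2 ≤ R₀ := by rw [hR₀]; linarith
  have hR₀pos : 0 < R₀ := by linarith
  have hRQ2 : Q + 2 ≤ R₀ - Q := by rw [hR₀]; linarith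
  set g : ℝ := (R₀ - Q)/q with hgdef
  clear_value g
  have hRQpos : 0 < R₀ - Q := by linarith
  have hgpos : 0 < g := by rw [hgdef]; exact div_pos hRQpos hq0
  set W : ℝ := q + Q/g with hWdef
  clear_value W
  have hWq : q ≤ W := by rw [hWdef]; exact le_add_of_nonneg_right (div_nonneg hQ hgpos.le)
  have hWpos : 0 < W := lt_of_lt_of_le hq0 hWq
  have hcR0 : 0 ≤ c/R₀ := by positivity
  have hcq2 : c ≤ 8*c*q^2*(Q+1) := by
    nlinarith [mul_le_mul_of_nonneg_left hq2 hc.le, mul_nonneg (mul_nonneg hc.le (sq_nonneg q)) hQ]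
  have hcR1 : c/R₀ ≤ 1 := by
    rw [div_le_one hR₀pos, hR₀]; linarith
  have hQg : Q/g = Q*q/(R₀-Q) := by
    rw [hgdef]; field_simp
  have hcW : c/R₀ * W ≤ 1/(2*q) := by
    have e1 : 2*c*q^2 ≤ R₀ - 1 := by rw [hR₀]; nlinarith [sq_nonneg q]
    have e2 : 2*c*q*(Q/g) ≤ 1 := by
      rw [hQg]
      have he : 2*c*q*(Q*q/(R₀-Q)) = (2*c*q^2*Q)/(R₀-Q) := by ring
      rw [he, div_le_one hRQpos, hR₀]
      nlinarith [mul_nonneg (mul_nonneg hc.le (sq_nonneg q)) hQ]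
    have heq : c/R₀ * W = (c*W)/R₀ := by ring
    rw [heq, div_le_div_iff₀ hR₀pos (by positivity)]
    have : c*W*(2*q) = 2*c*q^2 + 2*c*q*(Q/g) := by rw [hWdef]; ring
    rw [this]; linarith
  -- epsilon and C
  set ε : ℝ := 1/(12*q^2*R₀) with hεdef
  clear_value ε
  have hεpos : 0 < ε := by rw [hεdef]; positivity
  obtain ⟨C, hC1, hCb⟩ := kappa_lin hκ (κ := κ) hεpos
  have hCpos : 0 < C := lt_of_lt_of_le zero_lt_one hC1
  set L₁ : ℝ := 12*q*R₀*(1 + C) + 8*q*Q + 2*Q + 2 with hL₁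
  clear_value L₁
  have hL₁pos : 0 < L₁ := by rw [hL₁]; positivity
  have hκ11 : 1 ≤ κ 1 := hκ1 1 zero_le_one
  set M : ℝ := R₀*(2 + C + κ 1) + 2*Q + 1 + (1+q)*L₁ with hM
  clear_value M
  have hM1 : R₀*(1 + κ 1) ≤ M := by
    rw [hM]
    have h1 : R₀*(1 + κ 1) ≤ R₀*(2 + C + κ 1) :=
      mul_le_mul_of_nonneg_left (by linarith) hR₀pos.le
    nlinarith [mul_pos (show (0:ℝ) < 1+q by linarith) hL₁pos]
  have hMpos : 0 < M := by
    have h1 : 0 < R₀*(1 + κ 1) := mul_pos hR₀pos (by linarith)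
    linarith
  refine ⟨M, hMpos, ?_⟩
  intro η a b hab hη hηa hηb t ht
  set r : ℝ := dist o (η t) with hr
  clear_value r
  have hrnn : 0 ≤ r := by rw [hr]; exact dist_nonneg
  have hκr : 1 ≤ κ r := hκ1 r hrnn
  by_cases hcase : Metric.infDist (η t) Z ≤ R₀ * κ (r + 1)
  · have h1 : κ (r+1) ≤ κ r + κ 1 := kappa_subadd hκ hrnn zero_le_one
    calc Metric.infDist (η t) Z ≤ R₀ * κ (r+1) := hcase
      _ ≤ R₀*(κ r + κ 1) := mul_le_mul_of_nonneg_left h1 hR₀pos.le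
      _ ≤ R₀*κ r + (R₀*κ 1)*κ r := by
          have := le_mul_of_one_le_right (mul_nonneg hR₀pos.le (show (0:ℝ) ≤ κ 1 by linarith)) hκr
          nlinarith
      _ = (R₀*(1 + κ 1))*κ r := by ring
      _ ≤ M * κ r := mul_le_mul_of_nonneg_right hM1 (by linarith)
  · push_neg at hcase
    obtain ⟨hat, htb⟩ := ht
    have hηcont := hη.1
    have hDcont : ContinuousOn (fun s => Metric.infDist (η s) Z) (Set.Icc a b) :=
      (Metric.continuous_infDist_pt Z).comp_continuousOn hηcont
    have hdcont : ContinuousOn (fun s => dist o (η s) + 1) (Set.Icc a b) :=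
      ((continuous_const.dist continuous_id).comp_continuousOn hηcont).add continuousOn_const
    have hfcont : ContinuousOn (fun s => κ (dist o (η s) + 1)) (Set.Icc a b) :=
      (kappa_cont hκ).comp hdcont (fun s _ => Set.mem_Ioi.2 (by positivity))
    have hQG : ∀ s ∈ Set.Icc a b, ∀ s' ∈ Set.Icc a b, dist (η s) (η s') ≤ q * |s - s'| + Q :=
      fun s hs s' hs' => (hη.2 s hs s' hs').2
    -- left stopping time
    obtain ⟨S1, hS1def⟩ : ∃ S : Set ℝ, S = Set.Icc a t ∩
        (fun s => Metric.infDist (η s) Z - R₀ * κ (dist o (η s) + 1)) ⁻¹' (Set.Iic 0) := ⟨_, rfl⟩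
    have hIccat : Set.Icc a t ⊆ Set.Icc a b := Set.Icc_subset_Icc le_rfl htb
    have hS1closed : IsClosed S1 := by
      rw [hS1def]
      exact ((hDcont.mono hIccat).sub
        (continuousOn_const.mul (hfcont.mono hIccat))).preimage_isClosed_of_isClosed
        isClosed_Icc isClosed_Iic
    have hS1sub : S1 ⊆ Set.Icc a t := by rw [hS1def]; exact Set.inter_subset_left
    have hS1out : ∀ s ∈ S1, Metric.infDist (η s) Z ≤ R₀ * κ (dist o (η s) + 1) := by
      rw [hS1def]
      rintro s ⟨-, h⟩
      simp only [Set.mem_preimage, Set.mem_Iic] at h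
      linarith only [h]
    have hS1in : ∀ s, s ∈ Set.Icc a t →
        Metric.infDist (η s) Z ≤ R₀ * κ (dist o (η s) + 1) → s ∈ S1 := by
      rw [hS1def]
      exact fun s h1 h2 => ⟨h1, by simp only [Set.mem_preimage, Set.mem_Iic]; linarith only [h2]⟩
    have haS1 : a ∈ S1 := by
      apply hS1in a ⟨le_rfl, hat⟩
      have h0 : Metric.infDist (η a) Z = 0 := Metric.infDist_zero_of_mem hηa
      have h1 : 1 ≤ κ (dist o (η a) + 1) := hκ1 _ (by positivity)
      rw [h0]
      exact mul_nonneg hR₀pos.le (le_trans zero_le_one h1)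
    have hS1bdd : BddAbove S1 := ⟨t, fun s hs => (hS1sub hs).2⟩
    obtain ⟨s1, hs1def⟩ : ∃ x : ℝ, x = sSup S1 := ⟨_, rfl⟩
    have hs1S : s1 ∈ S1 := by
      rw [hs1def]
      exact hS1closed.csSup_mem ⟨a, haS1⟩ hS1bdd
    have htnS1 : t ∉ S1 := by
      intro hmem
      have h2 := hS1out t hmem
      rw [← hr] at h2
      linarith only [h2, hcase]
    have hs1t : s1 ≤ t := (hS1sub hs1S).2
    have has1 : a ≤ s1 := (hS1sub hs1S).1
    have hs1lt : s1 < t := lt_of_le_of_ne hs1t (fun h => htnS1 (h ▸ hs1S))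
    have hDs1u : Metric.infDist (η s1) Z ≤ R₀ * κ (dist o (η s1) + 1) := hS1out s1 hs1S
    have hS1max : ∀ s, s1 < s → s ≤ t →
        R₀ * κ (dist o (η s) + 1) < Metric.infDist (η s) Z := by
      intro s hss hst
      by_contra hcon'
      push_neg at hcon'
      have hmem : s ∈ S1 := hS1in s ⟨le_trans has1 hss.le, hst⟩ hcon'
      have h3 : s ≤ s1 := by rw [hs1def]; exact le_csSup hS1bdd hmem
      linarith only [h3, hss]
    -- right stopping time
    obtain ⟨S2, hS2def⟩ : ∃ S : Set ℝ, S = Set.Icc t b ∩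
        (fun s => Metric.infDist (η s) Z - R₀ * κ (dist o (η s) + 1)) ⁻¹' (Set.Iic 0) := ⟨_, rfl⟩
    have hIcctb : Set.Icc t b ⊆ Set.Icc a b := Set.Icc_subset_Icc hat le_rfl
    have hS2closed : IsClosed S2 := by
      rw [hS2def]
      exact ((hDcont.mono hIcctb).sub
        (continuousOn_const.mul (hfcont.mono hIcctb))).preimage_isClosed_of_isClosed
        isClosed_Icc isClosed_Iic
    have hS2sub : S2 ⊆ Set.Icc t b := by rw [hS2def]; exact Set.inter_subset_left
    have hS2out : ∀ s ∈ S2, Metric.infDist (η s) Z ≤ R₀ * κ (dist o (η s) + 1) := by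
      rw [hS2def]
      rintro s ⟨-, h⟩
      simp only [Set.mem_preimage, Set.mem_Iic] at h
      linarith only [h]
    have hS2in : ∀ s, s ∈ Set.Icc t b →
        Metric.infDist (η s) Z ≤ R₀ * κ (dist o (η s) + 1) → s ∈ S2 := by
      rw [hS2def]
      exact fun s h1 h2 => ⟨h1, by simp only [Set.mem_preimage, Set.mem_Iic]; linarith only [h2]⟩
    have hbS2 : b ∈ S2 := by
      apply hS2in b ⟨htb, le_rfl⟩
      have h0 : Metric.infDist (η b) Z = 0 := Metric.infDist_zero_of_mem hηb
      have h1 : 1 ≤ κ (dist o (η b) + 1) := hκ1 _ (by positivity)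
      rw [h0]
      exact mul_nonneg hR₀pos.le (le_trans zero_le_one h1)
    have hS2bdd : BddBelow S2 := ⟨t, fun s hs => (hS2sub hs).1⟩
    obtain ⟨s2, hs2def⟩ : ∃ x : ℝ, x = sInf S2 := ⟨_, rfl⟩
    have hs2S : s2 ∈ S2 := by
      rw [hs2def]
      exact hS2closed.csInf_mem ⟨b, hbS2⟩ hS2bdd
    have htnS2 : t ∉ S2 := by
      intro hmem
      have h2 := hS2out t hmem
      rw [← hr] at h2
      linarith only [h2, hcase]
    have hts2 : t ≤ s2 := (hS2sub hs2S).1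
    have hs2b : s2 ≤ b := (hS2sub hs2S).2
    have hts2lt : t < s2 :=
      lt_of_le_of_ne hts2 (fun h => htnS2 (by rw [h]; exact hs2S))
    have hDs2u : Metric.infDist (η s2) Z ≤ R₀ * κ (dist o (η s2) + 1) := hS2out s2 hs2S
    have hS2max : ∀ s, t ≤ s → s < s2 →
        R₀ * κ (dist o (η s) + 1) < Metric.infDist (η s) Z := by
      intro s hst hss
      by_contra hcon'
      push_neg at hcon'
      have hmem : s ∈ S2 := hS2in s ⟨hst, le_trans hss.le hs2b⟩ hcon'
      have h3 : s2 ≤ s := by rw [hs2def]; exact csInf_le hS2bdd hmem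
      linarith only [h3, hss]
    have h12 : s1 < s2 := lt_trans hs1lt hts2lt
    have hsub12 : Set.Icc s1 s2 ⊆ Set.Icc a b := Set.Icc_subset_Icc has1 hs2b
    -- excursion property on [s1,s2]
    have hE : ∀ s ∈ Set.Icc s1 s2,
        R₀ * κ (dist o (η s) + 1) ≤ Metric.infDist (η s) Z := by
      have hEclosed : IsClosed (Set.Icc s1 s2 ∩
          (fun s => R₀ * κ (dist o (η s) + 1) - Metric.infDist (η s) Z) ⁻¹' (Set.Iic 0)) :=
        ((continuousOn_const.mul (hfcont.mono hsub12)).sub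
          (hDcont.mono hsub12)).preimage_isClosed_of_isClosed isClosed_Icc isClosed_Iic
      have hIoo : Set.Ioo s1 s2 ⊆ Set.Icc s1 s2 ∩
          (fun s => R₀ * κ (dist o (η s) + 1) - Metric.infDist (η s) Z) ⁻¹' (Set.Iic 0) := by
        intro s hs
        refine ⟨⟨hs.1.le, hs.2.le⟩, ?_⟩
        simp only [Set.mem_preimage, Set.mem_Iic]
        rcases le_or_gt s t with h | h
        · linarith only [hS1max s hs.1 h]
        · linarith only [hS2max s h.le hs.2]
      intro s hs
      have hscl : s ∈ closure (Set.Ioo s1 s2) := by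
        rw [closure_Ioo (ne_of_lt h12)]
        exact hs
      have h2 := ((hEclosed.closure_subset_iff).2 hIoo hscl).2
      simp only [Set.mem_preimage, Set.mem_Iic] at h2
      linarith only [h2]
    have hDge : ∀ s ∈ Set.Icc s1 s2, R₀ ≤ Metric.infDist (η s) Z := by
      intro s hs
      have h1 := hκ1 (dist o (η s) + 1) (by positivity)
      have h2 := mul_le_mul_of_nonneg_left h1 hR₀pos.le
      linarith only [h2, hE s hs]
    have hDgeκ : ∀ s ∈ Set.Icc s1 s2,
        R₀ * κ (dist o (η s)) ≤ Metric.infDist (η s) Z := by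
      intro s hs
      have h1 : κ (dist o (η s)) ≤ κ (dist o (η s) + 1) :=
        hκmono (Set.mem_Ici.2 dist_nonneg) (Set.mem_Ici.2 (by positivity)) (by linarith [dist_nonneg (x := o) (y := η s)])
      have h2 := mul_le_mul_of_nonneg_left h1 hR₀pos.le
      linarith only [h2, hE s hs]
    obtain ⟨L, hLdef⟩ : ∃ x : ℝ, x = s2 - s1 := ⟨_, rfl⟩
    have hLnn : 0 ≤ L := by rw [hLdef]; linarith only [h12]
    have hqLQ : 0 ≤ q*L + Q + 1 := by linarith only [mul_nonneg hq0.le hLnn, hQ]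
    have htmem12 : t ∈ Set.Icc s1 s2 := ⟨hs1lt.le, hts2lt.le⟩
    have habs12 : ∀ s ∈ Set.Icc s1 s2, ∀ s' ∈ Set.Icc s1 s2, |s - s'| ≤ L := by
      intro s hs s' hs'
      rw [hLdef, abs_sub_le_iff]
      obtain ⟨ha1, ha2⟩ := hs
      obtain ⟨hb1, hb2⟩ := hs'
      constructor
      · linarith only [ha2, hb1]
      · linarith only [hb2, ha1]
    have hdist_ts : ∀ s ∈ Set.Icc s1 s2, dist (η t) (η s) ≤ q*L + Q := by
      intro s hs
      have h1 := hQG t ⟨hat, htb⟩ s (hsub12 hs)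
      have h2 := habs12 t htmem12 s hs
      have h3 := mul_le_mul_of_nonneg_left h2 hq0.le
      linarith only [h1, h3]
    have hnorm : ∀ s ∈ Set.Icc s1 s2, dist o (η s) ≤ r + (q*L + Q) := by
      intro s hs
      have h1 := dist_triangle o (η t) (η s)
      have h2 := hdist_ts s hs
      rw [hr]
      linarith only [h1, h2]
    have hκf_le : ∀ s ∈ Set.Icc s1 s2,
        κ (dist o (η s) + 1) ≤ κ r + (ε*(q*L + Q + 1) + C) := by
      intro s hs
      have h1 : dist o (η s) + 1 ≤ r + (q*L + Q + 1) := by linarith only [hnorm s hs]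
      have h2 : κ (dist o (η s) + 1) ≤ κ (r + (q*L + Q + 1)) :=
        hκmono (Set.mem_Ici.2 (by positivity)) (Set.mem_Ici.2 (by linarith only [hrnn, hqLQ])) h1
      have h3 : κ (r + (q*L + Q + 1)) ≤ κ r + κ (q*L + Q + 1) :=
        kappa_subadd hκ hrnn hqLQ
      have h4 : κ (q*L + Q + 1) ≤ ε*(q*L + Q + 1) + C := hCb _ hqLQ
      linarith only [h2, h3, h4]
    obtain ⟨B, hBdef⟩ : ∃ x : ℝ, x = R₀ * (κ r + (ε*(q*L + Q + 1) + C)) := ⟨_, rfl⟩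
    have hDs1B : Metric.infDist (η s1) Z ≤ B := by
      rw [hBdef]
      exact le_trans hDs1u
        (mul_le_mul_of_nonneg_left (hκf_le s1 ⟨le_rfl, h12.le⟩) hR₀pos.le)
    have hDs2B : Metric.infDist (η s2) Z ≤ B := by
      rw [hBdef]
      exact le_trans hDs2u
        (mul_le_mul_of_nonneg_left (hκf_le s2 ⟨h12.le, le_rfl⟩) hR₀pos.le)
    have hBpos : 0 < B := by
      rw [hBdef]
      have h1 : 0 ≤ ε*(q*L + Q + 1) := mul_nonneg hεpos.le hqLQ
      exact mul_pos hR₀pos (by linarith only [hκr, h1, hCpos])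
    -- the chain
    obtain ⟨A, hAdef⟩ : ∃ A : ℝ → Set ℝ, A = fun v => Set.Icc v s2 ∩
        (fun w => dist (η v) (η w)) ⁻¹' (Set.Ici (Metric.infDist (η v) Z)) := ⟨_, rfl⟩
    obtain ⟨nxt, hnxtdef⟩ : ∃ f : ℝ → ℝ,
        f = fun v => if (A v).Nonempty then sInf (A v) else s2 := ⟨_, rfl⟩
    have hAclosed : ∀ v ∈ Set.Icc s1 s2, IsClosed (A v) := by
      intro v hv
      rw [hAdef]
      exact ((continuous_const.dist continuous_id).comp_continuousOn
        (hηcont.mono (Set.Icc_subset_Icc (le_trans has1 hv.1) hs2b))).preimage_isClosed_of_isClosed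
        isClosed_Icc isClosed_Ici
    have hAsub : ∀ v, A v ⊆ Set.Icc v s2 := by
      intro v
      rw [hAdef]
      exact Set.inter_subset_left
    have hAout : ∀ v w, w ∈ A v → Metric.infDist (η v) Z ≤ dist (η v) (η w) := by
      intro v w hw
      rw [hAdef] at hw
      exact hw.2
    have hAin : ∀ v w, w ∈ Set.Icc v s2 →
        Metric.infDist (η v) Z ≤ dist (η v) (η w) → w ∈ A v := by
      intro v w h1 h2
      rw [hAdef]
      exact ⟨h1, h2⟩
    have hAbdd : ∀ v, BddBelow (A v) := fun v => ⟨v, fun w hw => (hAsub v hw).1⟩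
    have hnxt_pos : ∀ v, (A v).Nonempty → nxt v = sInf (A v) := by
      intro v h
      rw [hnxtdef]
      exact if_pos h
    have hnxt_empty : ∀ v, ¬(A v).Nonempty → nxt v = s2 := by
      intro v h
      rw [hnxtdef]
      exact if_neg h
    have hnxt_mem : ∀ v ∈ Set.Icc s1 s2, nxt v ∈ Set.Icc v s2 := by
      intro v hv
      by_cases h : (A v).Nonempty
      · rw [hnxt_pos v h]
        exact hAsub v ((hAclosed v hv).csInf_mem h (hAbdd v))
      · rw [hnxt_empty v h]
        exact ⟨hv.2, le_rfl⟩
    have hnxt_dist : ∀ v ∈ Set.Icc s1 s2,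
        dist (η v) (η (nxt v)) ≤ Metric.infDist (η v) Z := by
      intro v hv
      by_cases h : (A v).Nonempty
      · have hmem := (hAclosed v hv).csInf_mem h (hAbdd v)
        have hvle : v ≤ sInf (A v) := (hAsub v hmem).1
        rcases eq_or_lt_of_le hvle with he | hlt
        · rw [hnxt_pos v h, ← he]
          simpa using Metric.infDist_nonneg
        · have hCc : IsClosed (Set.Icc v s2 ∩
              (fun w => dist (η v) (η w)) ⁻¹' (Set.Iic (Metric.infDist (η v) Z))) :=
            ((continuous_const.dist continuous_id).comp_continuousOn
              (hηcont.mono (Set.Icc_subset_Icc (le_trans has1 hv.1) hs2b))).preimage_isClosed_of_isClosed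
              isClosed_Icc isClosed_Iic
          have hsub : Set.Ico v (sInf (A v)) ⊆ Set.Icc v s2 ∩
              (fun w => dist (η v) (η w)) ⁻¹' (Set.Iic (Metric.infDist (η v) Z)) := by
            intro w hw
            have hwn : w ∉ A v := notMem_of_lt_csInf hw.2 (hAbdd v)
            have hw2 : w ∈ Set.Icc v s2 := ⟨hw.1, le_trans hw.2.le (hAsub v hmem).2⟩
            refine ⟨hw2, ?_⟩
            simp only [Set.mem_preimage, Set.mem_Iic]
            by_contra hcon'
            push_neg at hcon'
            exact hwn (hAin v w hw2 hcon'.le)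
          have hmcl : sInf (A v) ∈ Set.Icc v s2 ∩
              (fun w => dist (η v) (η w)) ⁻¹' (Set.Iic (Metric.infDist (η v) Z)) := by
            apply hCc.closure_subset_iff.2 hsub
            rw [closure_Ico (ne_of_lt hlt)]
            exact ⟨hvle, le_rfl⟩
          rw [hnxt_pos v h]
          exact hmcl.2
      · rw [hnxt_empty v h]
        have hns : s2 ∉ A v := fun hm => h ⟨s2, hm⟩
        have h2 : ¬ (Metric.infDist (η v) Z ≤ dist (η v) (η s2)) := by
          intro hle
          exact hns (hAin v s2 ⟨hv.2, le_rfl⟩ hle)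
        linarith only [not_le.1 h2]
    have hnxt_full : ∀ v ∈ Set.Icc s1 s2, (A v).Nonempty →
        Metric.infDist (η v) Z ≤ dist (η v) (η (nxt v)) := by
      intro v hv h
      rw [hnxt_pos v h]
      exact hAout v _ ((hAclosed v hv).csInf_mem h (hAbdd v))
    have hnxt_gap : ∀ v ∈ Set.Icc s1 s2, (A v).Nonempty → v + g ≤ nxt v := by
      intro v hv h
      have h1 := hnxt_full v hv h
      have hnm := hnxt_mem v hv
      have h2 := hQG v (hsub12 hv) (nxt v) (hsub12 ⟨le_trans hv.1 hnm.1, hnm.2⟩)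
      have h3 := hDge v hv
      have h4 : |v - nxt v| = nxt v - v := by
        rw [abs_sub_comm]
        exact abs_of_nonneg (by linarith [hnm.1])
      rw [h4] at h2
      have h5 : (R₀ - Q)/q ≤ nxt v - v := by
        rw [div_le_iff₀ hq0]
        linarith only [h1, h2, h3]
      rw [hgdef]
      linarith only [h5]
    have hs2fix : nxt s2 = s2 := by
      by_cases h : (A s2).Nonempty
      · have hmem := (hAclosed s2 ⟨h12.le, le_rfl⟩).csInf_mem h (hAbdd s2)
        have h1 := hAsub s2 hmem
        rw [hnxt_pos s2 h]
        exact le_antisymm h1.2 h1.1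
      · exact hnxt_empty s2 h
    obtain ⟨u, hu0, husucc⟩ : ∃ u : ℕ → ℝ, u 0 = s1 ∧ ∀ i, u (i+1) = nxt (u i) :=
      ⟨fun n => Nat.rec s1 (fun _ ih => nxt ih) n, rfl, fun _ => rfl⟩
    have humem : ∀ i, u i ∈ Set.Icc s1 s2 := by
      intro i
      induction i with
      | zero => rw [hu0]; exact ⟨le_rfl, h12.le⟩
      | succ i ih =>
        have h1 := hnxt_mem (u i) ih
        rw [husucc]
        exact ⟨le_trans ih.1 h1.1, h1.2⟩
    have humono : ∀ i, u i ≤ u (i+1) := by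
      intro i
      rw [husucc]
      exact (hnxt_mem (u i) (humem i)).1
    have hufix : ∀ i, u i = s2 → u (i+1) = s2 := by
      intro i h
      rw [husucc, h]
      exact hs2fix
    have humin : ∀ i : ℕ, min (s1 + i*g) s2 ≤ u i := by
      intro i
      induction i with
      | zero =>
        rw [hu0]
        simpa using min_le_left s1 s2
      | succ i ih =>
        by_cases h : u i = s2
        · rw [hufix i h]
          exact min_le_right _ _
        · by_cases hA : (A (u i)).Nonempty
          · have hgap : u i + g ≤ u (i+1) := by
              rw [husucc]
              exact hnxt_gap (u i) (humem i) hA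
            have hui : u i < s2 := lt_of_le_of_ne (humem i).2 h
            have hmin : min (s1 + i*g) s2 = s1 + i*g := by
              rcases min_cases (s1 + i*g) s2 with ⟨he, _⟩ | ⟨he, hlt⟩
              · exact he
              · exfalso
                rw [he] at ih
                linarith only [ih, hui]
            rw [hmin] at ih
            have h2 : s1 + (i+1 : ℕ)*g ≤ u (i+1) := by
              push_cast
              linarith only [ih, hgap]
            exact le_trans (min_le_left _ _) h2
          · rw [husucc, hnxt_empty _ hA]
            exact min_le_right _ _
    obtain ⟨N, hN⟩ : ∃ N : ℕ, L/g ≤ N := exists_nat_ge _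
    have huN : u N = s2 := by
      have h1 : L ≤ N*g := by
        have h2 := mul_le_mul_of_nonneg_right hN hgpos.le
        rwa [div_mul_cancel₀ _ (ne_of_gt hgpos)] at h2
      have h2 : s2 ≤ s1 + N*g := by rw [hLdef] at h1; linarith only [h1]
      have h3 := humin N
      rcases min_cases (s1 + N*g) s2 with ⟨he, _⟩ | ⟨he, _⟩
      · rw [he] at h3
        exact le_antisymm (humem N).2 (le_trans h2 h3)
      · rw [he] at h3
        exact le_antisymm (humem N).2 h3
    obtain ⟨p, hpdef⟩ : ∃ p : ℕ → X, ∀ i, p i = φp (η (u i)) := ⟨_, fun _ => rfl⟩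
    have hstep : ∀ i, dist (p i) (p (i+1)) ≤ (c/R₀) * Metric.infDist (η (u i)) Z := by
      intro i
      have h0 : dist (η (u i)) (η (u (i+1))) ≤ Metric.infDist (η (u i)) Z := by
        rw [husucc]
        exact hnxt_dist (u i) (humem i)
      have h1 : dist (p i) (p (i+1)) ≤ c * κ (dist o (η (u i))) := by
        rw [hpdef i, hpdef (i+1)]
        exact hpair _ _ h0
      have h2 := hDgeκ (u i) (humem i)
      calc dist (p i) (p (i+1)) ≤ c * κ (dist o (η (u i))) := h1
        _ = (c/R₀) * (R₀ * κ (dist o (η (u i)))) := by field_simp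
        _ ≤ (c/R₀) * Metric.infDist (η (u i)) Z := mul_le_mul_of_nonneg_left h2 hcR0
    have hmain : ∀ i : ℕ, dist (p 0) (p i) ≤ (c/R₀)*(W*(u i - s1)) +
        (if u i = s2 then (c/R₀)*(Q + Metric.infDist (η s2) Z) else 0) := by
      intro i
      induction i with
      | zero =>
        rw [hu0, if_neg (ne_of_lt h12)]
        simp [dist_self]
      | succ i ih =>
        have htri := dist_triangle (p 0) (p i) (p (i+1))
        by_cases h : u i = s2
        · have hfix := hufix i h
          have hpeq : p (i+1) = p i := by
            rw [hpdef (i+1), hpdef i, hfix, h]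
          rw [hpeq, hfix, if_pos rfl]
          rw [h, if_pos rfl] at ih
          exact ih
        · have hui : u i < s2 := lt_of_le_of_ne (humem i).2 h
          rw [if_neg h, add_zero] at ih
          have hgapnn : 0 ≤ u (i+1) - u i := by linarith [humono i]
          have hite : (0:ℝ) ≤ (if u (i+1) = s2 then
              (c/R₀)*(Q + Metric.infDist (η s2) Z) else 0) := by
            split
            · exact mul_nonneg hcR0 (add_nonneg hQ Metric.infDist_nonneg)
            · exact le_rfl
          by_cases hA : (A (u i)).Nonempty
          · have hgap : u i + g ≤ u (i+1) := by
              rw [husucc]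
              exact hnxt_gap (u i) (humem i) hA
            have hfull : Metric.infDist (η (u i)) Z ≤ dist (η (u i)) (η (u (i+1))) := by
              rw [husucc]
              exact hnxt_full (u i) (humem i) hA
            have hQG2 := hQG (u i) (hsub12 (humem i)) (u (i+1)) (hsub12 (humem (i+1)))
            have habs : |u i - u (i+1)| = u (i+1) - u i := by
              rw [abs_sub_comm]
              exact abs_of_nonneg hgapnn
            rw [habs] at hQG2
            have hstepb : dist (p i) (p (i+1)) ≤ (c/R₀)*(q*(u (i+1) - u i) + Q) :=
              le_trans (hstep i) (mul_le_mul_of_nonneg_left (by linarith only [hfull, hQG2]) hcR0)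
            have hQgap : Q ≤ (Q/g)*(u (i+1) - u i) := by
              have hg2 : g ≤ u (i+1) - u i := by linarith
              have h3 := mul_le_mul_of_nonneg_left hg2 (div_nonneg hQ hgpos.le)
              calc Q = (Q/g)*g := by field_simp
                _ ≤ (Q/g)*(u (i+1) - u i) := h3
            have hWgap : (c/R₀)*(q*(u (i+1) - u i) + Q) ≤ (c/R₀)*(W*(u (i+1) - u i)) := by
              apply mul_le_mul_of_nonneg_left ?_ hcR0
              rw [hWdef]
              linarith only [hQgap]
            have he2 : (c/R₀)*(W*(u i - s1)) + (c/R₀)*(W*(u (i+1) - u i)) =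
                (c/R₀)*(W*(u (i+1) - s1)) := by ring
            linarith only [htri, ih, hstepb, hWgap, he2, hite]
          · have hu1 : u (i+1) = s2 := by
              rw [husucc]
              exact hnxt_empty _ hA
            have hQG2 := hQG (u i) (hsub12 (humem i)) (u (i+1)) (hsub12 (humem (i+1)))
            have habs : |u i - u (i+1)| = u (i+1) - u i := by
              rw [abs_sub_comm]
              exact abs_of_nonneg hgapnn
            rw [habs] at hQG2
            have hlip : Metric.infDist (η (u i)) Z ≤
                Metric.infDist (η (u (i+1))) Z + dist (η (u i)) (η (u (i+1))) :=
              Metric.infDist_le_infDist_add_dist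
            have hds2 : Metric.infDist (η (u (i+1))) Z = Metric.infDist (η s2) Z := by
              rw [hu1]
            have hstepb : dist (p i) (p (i+1)) ≤
                (c/R₀)*(q*(u (i+1) - u i) + Q + Metric.infDist (η s2) Z) := by
              refine le_trans (hstep i) (mul_le_mul_of_nonneg_left ?_ hcR0)
              linarith only [hQG2, hlip, hds2]
            have hWq2 : (c/R₀)*(q*(u (i+1) - u i)) ≤ (c/R₀)*(W*(u (i+1) - u i)) :=
              mul_le_mul_of_nonneg_left (mul_le_mul_of_nonneg_right hWq hgapnn) hcR0
            rw [if_pos hu1]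
            have he1 : (c/R₀)*(q*(u (i+1) - u i) + Q + Metric.infDist (η s2) Z) =
                (c/R₀)*(q*(u (i+1) - u i)) + (c/R₀)*(Q + Metric.infDist (η s2) Z) := by ring
            have he2 : (c/R₀)*(W*(u i - s1)) + (c/R₀)*(W*(u (i+1) - u i)) =
                (c/R₀)*(W*(u (i+1) - s1)) := by ring
            linarith only [htri, ih, hstepb, hWq2, he1, he2]
    -- final assembly
    have hfinal := hmain N
    rw [huN, if_pos rfl] at hfinal
    have hp0 : dist (η s1) (p 0) = Metric.infDist (η s1) Z := by
      rw [hpdef 0, hu0]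
      exact (hφp (η s1)).2
    have hpN : dist (p N) (η s2) = Metric.infDist (η s2) Z := by
      rw [hpdef N, huN, dist_comm]
      exact (hφp (η s2)).2
    have hlow : L/q - Q ≤ dist (η s1) (η s2) := by
      have h1 := (hη.2 s1 (hsub12 ⟨le_rfl, h12.le⟩) s2 (hsub12 ⟨h12.le, le_rfl⟩)).1
      have habs : |s1 - s2| = L := by
        rw [hLdef, abs_sub_comm]
        exact abs_of_nonneg (by linarith)
      rwa [habs] at h1
    have htri2 : dist (η s1) (η s2) ≤
        Metric.infDist (η s1) Z + dist (p 0) (p N) + Metric.infDist (η s2) Z := by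
      have h1 := dist_triangle4 (η s1) (p 0) (p N) (η s2)
      rw [hp0, hpN] at h1
      linarith only [h1]
    have hup : dist (p 0) (p N) ≤ (c/R₀)*(W*L) + (Q + B) := by
      rw [← hLdef] at hfinal
      have h2 : (c/R₀)*(Q + Metric.infDist (η s2) Z) ≤ Q + B := by
        have h3 : (c/R₀)*(Q + Metric.infDist (η s2) Z) ≤ Q + Metric.infDist (η s2) Z :=
          mul_le_of_le_one_left (add_nonneg hQ Metric.infDist_nonneg) hcR1
        linarith only [h3, hDs2B]
      linarith only [hfinal, h2]
    have hWL : (c/R₀)*(W*L) ≤ 1/(2*q)*L := by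
      have h1 := mul_le_mul_of_nonneg_right hcW hLnn
      calc (c/R₀)*(W*L) = (c/R₀*W)*L := by ring
        _ ≤ 1/(2*q)*L := h1
    have hLb : L ≤ 2*q*(2*Q + 3*B) := by
      have h0 : L/q - Q ≤ B + ((c/R₀)*(W*L) + (Q + B)) + B := by
        linarith only [hlow, htri2, hup, hDs1B, hDs2B]
      have h1 : L/q ≤ 2*Q + 3*B + 1/(2*q)*L := by linarith only [h0, hWL]
      have h2 : (L/q)*q = L := by field_simp
      have h3 : (1/(2*q)*L)*q = L/2 := by field_simp
      have h4 := mul_le_mul_of_nonneg_right h1 hq0.le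
      rw [h2] at h4
      linarith only [h4, h3]
    have hεL : 6*q*(R₀*(ε*(q*L))) = L/2 := by
      rw [hεdef]
      field_simp
      ring
    have he1 : 6*q*(R₀*(ε*(Q+1))) = (Q+1)/(2*q) := by
      rw [hεdef]
      field_simp
      ring
    have he2 : (Q+1)/(2*q) ≤ Q + 1 := by
      rw [div_le_iff₀ (by positivity)]
      have h1 := mul_nonneg (show (0:ℝ) ≤ Q+1 by linarith only [hQ])
        (show (0:ℝ) ≤ 2*q-1 by linarith only [hq])
      linarith only [h1]
    have hLb2 : L ≤ L₁ * κ r := by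
      rw [hBdef] at hLb
      have hx : 2*q*(2*Q + 3*(R₀ * (κ r + (ε*(q*L + Q + 1) + C)))) =
          4*q*Q + 6*q*(R₀*(κ r)) + 6*q*(R₀*(ε*(q*L))) + 6*q*(R₀*(ε*(Q+1))) + 6*q*(R₀*C) := by
        ring
      rw [hx, hεL, he1] at hLb
      have h5 : L ≤ 8*q*Q + 12*q*(R₀*(κ r)) + 2*(Q+1) + 12*q*(R₀*C) := by
        linarith only [hLb, he2]
      rw [hL₁]
      have hκr0 : 0 ≤ κ r - 1 := by linarith only [hκr]
      linarith only [h5,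
        mul_nonneg (mul_nonneg (mul_nonneg (by norm_num : (0:ℝ) ≤ 12) hq0.le) hR₀pos.le)
          (mul_nonneg hCpos.le hκr0),
        mul_nonneg (mul_nonneg (by positivity : (0:ℝ) ≤ 8*q) hQ) hκr0,
        mul_nonneg (mul_nonneg (mul_nonneg (by norm_num : (0:ℝ) ≤ 12) hq0.le) hR₀pos.le) hκr0,
        mul_nonneg (show (0:ℝ) ≤ 2*Q + 2 by linarith only [hQ]) hκr0]
    -- conclude
    have hDt : Metric.infDist (η t) Z ≤ Metric.infDist (η s1) Z + dist (η t) (η s1) :=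
      Metric.infDist_le_infDist_add_dist
    have hts1 : dist (η t) (η s1) ≤ q*L + Q := hdist_ts s1 ⟨le_rfl, h12.le⟩
    have hεq2 : R₀*(ε*(q*L)) ≤ L := by
      have h1 : R₀*(ε*(q*L)) = L/(12*q) := by
        rw [hεdef]
        field_simp
      rw [h1, div_le_iff₀ (by positivity)]
      have h2 := mul_nonneg hLnn (show (0:ℝ) ≤ 12*q - 1 by linarith only [hq])
      linarith only [h2]
    have hεQ2 : R₀*(ε*(Q+1)) ≤ Q+1 := by
      have h1 : R₀*(ε*(Q+1)) = (Q+1)/(12*q^2) := by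
        rw [hεdef]
        field_simp
      rw [h1, div_le_iff₀ (by positivity)]
      have h2 := mul_nonneg (show (0:ℝ) ≤ Q+1 by linarith only [hQ])
        (show (0:ℝ) ≤ 12*q^2 - 1 by linarith only [hq2])
      linarith only [h2]
    have hqL : q*L ≤ q*(L₁ * κ r) := mul_le_mul_of_nonneg_left hLb2 hq0.le
    have hBexp : B = R₀*(κ r) + R₀*(ε*(q*L)) + R₀*(ε*(Q+1)) + R₀*C := by
      rw [hBdef]; ring
    have hfin : Metric.infDist (η t) Z ≤
        R₀*(κ r) + L + (Q+1) + R₀*C + (q*L + Q) := by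
      have h6 : Metric.infDist (η s1) Z ≤ R₀*(κ r) + R₀*(ε*(q*L)) + R₀*(ε*(Q+1)) + R₀*C := by
        rw [← hBexp]
        exact hDs1B
      linarith only [hDt, hts1, hεq2, hεQ2, h6]
    have hκr0 : 0 ≤ κ r - 1 := by linarith only [hκr]
    calc Metric.infDist (η t) Z ≤ R₀*(κ r) + L + (Q+1) + R₀*C + (q*L + Q) := hfin
      _ ≤ R₀*(κ r) + (1+q)*(L₁ * κ r) + (Q+1) + R₀*C + Q := by
          linarith only [hLb2, hqL]
      _ ≤ M * κ r := by
          rw [hM]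
          linarith only [mul_nonneg (mul_nonneg hR₀pos.le hCpos.le) hκr0,
            mul_nonneg (show (0:ℝ) ≤ 2*Q + 1 by linarith only [hQ]) hκr0,
            mul_nonneg hR₀pos.le hκr0,
            mul_nonneg hR₀pos.le (mul_nonneg (show (0:ℝ) ≤ κ 1 by linarith only [hκ11])
              (show (0:ℝ) ≤ κ r by linarith only [hκr])),
            hR₀pos]

/-- A `κ`-contracting quasi-geodesic ray is weakly `κ`-Morse: there is a
Morse gauge `m` such that every `(q,Q)`-quasi-geodesic segment with endpoints on the ray
stays in the `(κ, m q Q)`-neighbourhood of the ray. -/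
theorem kappa_contracting_implies_weakly_kappa_Morse
    {X : Type*} [MetricSpace X] [ProperSpace X] (hgeo : GeodesicSpace X)
    (o : X) (κ : ℝ → ℝ) (hκ : IsSublinear κ)
    (q₀ Q₀ : ℝ) (hq₀ : 1 ≤ q₀) (hQ₀ : 0 ≤ Q₀)
    (β : ℝ → X) (hβo : β 0 = o) (hβ : IsQuasiGeodesicOn q₀ Q₀ β (Set.Ici 0))
    (hcon : IsKappaContracting o κ (β '' Set.Ici 0)) :
    ∃ m : ℝ → ℝ → ℝ, (∀ q Q, 0 < m q Q) ∧
      ∀ q Q : ℝ, 1 ≤ q → 0 ≤ Q →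
        ∀ (η : ℝ → X) (a b : ℝ), a ≤ b → IsQuasiGeodesicOn q Q η (Set.Icc a b) →
          η a ∈ β '' Set.Ici 0 → η b ∈ β '' Set.Ici 0 →
          ∀ t ∈ Set.Icc a b,
            Metric.infDist (η t) (β '' Set.Ici 0) ≤ m q Q * κ (dist o (η t)) := by
  obtain ⟨c, hc, hcd⟩ := hcon
  have hZcl : IsClosed (β '' Set.Ici 0) := qg_image_closed hq₀ β hβ
  have hoZ : o ∈ β '' Set.Ici 0 := ⟨0, Set.self_mem_Ici, hβo⟩
  have key : ∀ q Q : ℝ, 1 ≤ q → 0 ≤ Q → ∃ M : ℝ, 0 < M ∧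
      ∀ (η : ℝ → X) (a b : ℝ), a ≤ b → IsQuasiGeodesicOn q Q η (Set.Icc a b) →
        η a ∈ β '' Set.Ici 0 → η b ∈ β '' Set.Ici 0 → ∀ t ∈ Set.Icc a b,
          Metric.infDist (η t) (β '' Set.Ici 0) ≤ M * κ (dist o (η t)) :=
    fun q Q hq hQ => main_aux o κ hκ (β '' Set.Ici 0) hZcl hoZ c hc hcd q Q hq hQ
  have key2 : ∀ q Q : ℝ, ∃ M : ℝ, 0 < M ∧
      ∀ (η : ℝ → X) (a b : ℝ), a ≤ b →
        IsQuasiGeodesicOn (max q 1) (max Q 0) η (Set.Icc a b) →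
        η a ∈ β '' Set.Ici 0 → η b ∈ β '' Set.Ici 0 → ∀ t ∈ Set.Icc a b,
          Metric.infDist (η t) (β '' Set.Ici 0) ≤ M * κ (dist o (η t)) :=
    fun q Q => key (max q 1) (max Q 0) (le_max_right _ _) (le_max_right _ _)
  choose m hm using key2
  refine ⟨m, fun q Q => (hm q Q).1, ?_⟩
  intro q Q hq hQ η a b hab hη hηa hηb t ht
  have hspec := (hm q Q).2 η a b hab
  rw [max_eq_left hq, max_eq_left hQ] at hspec
  exact hspec hη hηa hηb t ht
end

section
/- Let X be a metric space with basepoint o, and let κ : [0,∞) → [1,∞) be monotone increasing and concave. Let A, B, C be nonempty subsets of X and let n, m ≥ 1. If A ⊆ N_κ(B, n) and B ⊆ N_κ(C, m), then A ⊆ N_κ(C, n') where n' = n + m(1 + n·κ(1)). In particular, the relation of κ-fellow traveling is transitive after enlarging the multiplicative constant. -/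
open Metric Set Filter

/-- The `(κ, n)`-neighbourhood of a subset `Z` with respect to the basepoint `o`:
points `x` with `d(x, Z) ≤ n · κ(‖x‖)`. -/
def KNbhd {X : Type*} [MetricSpace X] (o : X) (κ : ℝ → ℝ) (Z : Set X) (n : ℝ) : Set X :=
  {x | Metric.infDist x Z ≤ n * κ (dist o x)}

lemma kappa_subadd_s7 {κ : ℝ → ℝ} (hconc : ConcaveOn ℝ (Set.Ici 0) κ)
    (h0 : 0 ≤ κ 0) {s t : ℝ} (hs : 0 ≤ s) (ht : 0 ≤ t) :
    κ (s + t) ≤ κ s + κ t := by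
  rcases eq_or_lt_of_le (add_nonneg hs ht) with h | h
  · have hs0 : s = 0 := by linarith [ht, hs, h.symm ▸ (by linarith : s + t = 0)]
    have ht0 : t = 0 := by linarith
    simp [hs0, ht0, ← h]
    linarith
  · set u := s + t with hu
    have hsu : κ s ≥ (s / u) * κ u := by
      have := hconc.2 (Set.mem_Ici.2 (le_of_lt h)) (Set.mem_Ici.2 le_rfl)
        (div_nonneg hs h.le) (div_nonneg ht h.le) (by field_simp; exact hu.symm)
      have heq : (s / u) • u + (t / u) • (0:ℝ) = s := by
        simp only [smul_eq_mul, mul_zero, add_zero]; field_simp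
      rw [heq] at this
      have : (s/u) * κ u + (t/u) * κ 0 ≤ κ s := by simpa [smul_eq_mul] using this
      nlinarith [mul_nonneg (div_nonneg ht h.le) h0]
    have htu : κ t ≥ (t / u) * κ u := by
      have := hconc.2 (Set.mem_Ici.2 (le_of_lt h)) (Set.mem_Ici.2 le_rfl)
        (div_nonneg ht h.le) (div_nonneg hs h.le) (by field_simp; linarith)
      have heq : (t / u) • u + (s / u) • (0:ℝ) = t := by
        simp only [smul_eq_mul, mul_zero, add_zero]; field_simp
      rw [heq] at this
      have : (t/u) * κ u + (s/u) * κ 0 ≤ κ t := by simpa [smul_eq_mul] using this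
      nlinarith [mul_nonneg (div_nonneg hs h.le) h0]
    have : (s/u) * κ u + (t/u) * κ u = κ u := by field_simp; ring
    linarith

lemma kappa_scale {κ : ℝ → ℝ} (hconc : ConcaveOn ℝ (Set.Ici 0) κ)
    (h0 : 0 ≤ κ 0) {c x : ℝ} (hc : 1 ≤ c) (hx : 0 ≤ x) :
    κ (c * x) ≤ c * κ x := by
  have hc0 : 0 < c := by linarith
  have := hconc.2 (Set.mem_Ici.2 (mul_nonneg hc0.le hx)) (Set.mem_Ici.2 le_rfl)
    (by positivity : (0:ℝ) ≤ 1/c) (by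
      have : 1/c ≤ 1 := by rw [div_le_one hc0]; linarith
      linarith : (0:ℝ) ≤ 1 - 1/c) (by ring)
  have heq : (1/c) • (c*x) + (1 - 1/c) • (0:ℝ) = x := by simp only [smul_eq_mul, mul_zero, add_zero]; field_simp
  rw [heq] at this
  have h1 : (1/c) * κ (c*x) + (1 - 1/c) * κ 0 ≤ κ x := by simpa [smul_eq_mul] using this
  have h2 : 0 ≤ (1 - 1/c) * κ 0 := by
    apply mul_nonneg _ h0
    have : 1/c ≤ 1 := by rw [div_le_one hc0]; linarith
    linarith
  have : (1/c) * κ (c*x) ≤ κ x := by linarith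
  calc κ (c*x) = c * ((1/c) * κ (c*x)) := by field_simp
    _ ≤ c * κ x := by nlinarith

/-- Chaining of `κ`-neighbourhoods: if `A ⊆ N_κ(B, n)` and
`B ⊆ N_κ(C, m)` with `n, m ≥ 1`, then `A ⊆ N_κ(C, n + m(1 + n·κ(1)))`. -/
theorem kappa_neighbourhood_trans
    {X : Type*} [MetricSpace X] (o : X) (κ : ℝ → ℝ)
    (hmono : MonotoneOn κ (Set.Ici 0)) (hconc : ConcaveOn ℝ (Set.Ici 0) κ)
    (hone : ∀ t : ℝ, 0 ≤ t → 1 ≤ κ t)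
    (A B C : Set X) (hA : A.Nonempty) (hB : B.Nonempty) (hC : C.Nonempty)
    (n m : ℝ) (hn : 1 ≤ n) (hm : 1 ≤ m)
    (hAB : A ⊆ KNbhd o κ B n) (hBC : B ⊆ KNbhd o κ C m) :
    A ⊆ KNbhd o κ C (n + m * (1 + n * κ 1)) := by
  intro a ha
  have h0 : (0:ℝ) ≤ κ 0 := by linarith [hone 0 le_rfl]
  set K := κ (dist o a) with hK
  have hK1 : 1 ≤ K := hone _ dist_nonneg
  have hκ1 : 1 ≤ κ 1 := hone 1 zero_le_one
  have h1 : Metric.infDist a B ≤ n * K := hAB ha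
  show Metric.infDist a C ≤ (n + m * (1 + n * κ 1)) * K
  refine le_of_forall_pos_le_add fun ε hε => ?_
  set ε' := ε / (1 + m * K * κ 1) with hε'
  have hden : 0 < 1 + m * K * κ 1 := by
    have h1' : (0:ℝ) < m * K * κ 1 :=
      mul_pos (mul_pos (by linarith) (by linarith)) (by linarith)
    linarith
  have hε'pos : 0 < ε' := div_pos hε hden
  obtain ⟨b, hbB, hab⟩ := (Metric.infDist_lt_iff hB).1 (lt_of_le_of_lt h1 (show n * K < n * K + ε' by linarith))
  have h2 : Metric.infDist b C ≤ m * κ (dist o b) := hBC hbB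
  have hob : dist o b ≤ dist o a + (n * K + ε') := by
    have := dist_triangle o a b
    linarith
  have hnK1 : 1 ≤ (n + ε') * K := by nlinarith
  have hκb : κ (dist o b) ≤ K + (n + ε') * K * κ 1 := by
    have hm1 : κ (dist o b) ≤ κ (dist o a + (n * K + ε')) := by
      apply hmono dist_nonneg _ hob
      exact Set.mem_Ici.2 (by positivity)
    have hm2 : κ (dist o a + (n * K + ε')) ≤ K + κ (n * K + ε') := by
      have := kappa_subadd_s7 hconc h0 (show (0:ℝ) ≤ dist o a from dist_nonneg) (by nlinarith : (0:ℝ) ≤ n * K + ε')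
      linarith
    have hle : n * K + ε' ≤ (n + ε') * K := by nlinarith [mul_le_mul_of_nonneg_left hK1 hε'pos.le]
    have hm3 : κ (n * K + ε') ≤ κ ((n + ε') * K) :=
      hmono (Set.mem_Ici.2 (by nlinarith)) (Set.mem_Ici.2 (by nlinarith)) hle
    have hm4 : κ ((n + ε') * K) ≤ (n + ε') * K * κ 1 := by
      have h5 := kappa_scale hconc h0 hnK1 zero_le_one
      rw [mul_one] at h5
      exact h5
    linarith
  have h3 : Metric.infDist a C ≤ dist a b + Metric.infDist b C := by
    have := Metric.infDist_le_infDist_add_dist (x := a) (y := b) (s := C)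
    -- reorder
    linarith
  have hKnn : 0 ≤ K := by linarith
  have hεeq : ε' * (1 + m * K * κ 1) = ε := by
    rw [hε']; field_simp
  have hbc : Metric.infDist b C ≤ m * (K + (n + ε') * K * κ 1) :=
    le_trans h2 (mul_le_mul_of_nonneg_left hκb (by linarith))
  calc Metric.infDist a C ≤ (n * K + ε') + m * (K + (n + ε') * K * κ 1) := by linarith
    _ = (n + m * (1 + n * κ 1)) * K + ε' * (1 + m * K * κ 1) := by ring
    _ = (n + m * (1 + n * κ 1)) * K + ε := by rw [hεeq]
end

section
/- Let κ : [0,∞) → [1,∞) be a function that is bounded on compact sets and satisfies lim_{t→∞} κ(t)/t = 0. Then there exists a monotone increasing, concave function κ̄ : [0,∞) → [1,∞) such that κ(t) ≤ κ̄(t) for all t ≥ 0 and lim_{t→∞} κ̄(t)/t = 0. In other words, every locally bounded sublinear function admits a monotone increasing, concave, sublinear majorant. -/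
open Filter

/-- Every locally bounded sublinear function `κ : [0,∞) → [1,∞)` admits a
monotone increasing, concave, sublinear majorant `κ̄ : [0,∞) → [1,∞)`. -/
theorem exists_concave_monotone_sublinear_majorant (κ : ℝ → ℝ)
    (hone : ∀ t : ℝ, 0 ≤ t → 1 ≤ κ t)
    (hbdd : ∀ T : ℝ, ∃ M : ℝ, ∀ t ∈ Set.Icc (0:ℝ) T, κ t ≤ M)
    (hsub : Tendsto (fun t => κ t / t) atTop (nhds 0)) :
    ∃ κ' : ℝ → ℝ, MonotoneOn κ' (Set.Ici 0) ∧ ConcaveOn ℝ (Set.Ici 0) κ' ∧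
      (∀ t : ℝ, 0 ≤ t → 1 ≤ κ' t) ∧ (∀ t : ℝ, 0 ≤ t → κ t ≤ κ' t) ∧
      Tendsto (fun t => κ' t / t) atTop (nhds 0) := by
  -- Step 1: for each n, find A n ≥ 1 with κ t ≤ A n + t/(n+1) for all t ≥ 0.
  have hA : ∀ n : ℕ, ∃ A : ℝ, 1 ≤ A ∧ ∀ t, 0 ≤ t → κ t ≤ A + t / (n + 1) := by
    intro n
    have hε : (0:ℝ) < 1 / (n + 1) := by positivity
    have h1 : ∀ᶠ t in atTop, κ t / t < 1 / (n + 1) := hsub.eventually_lt_const hε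
    obtain ⟨T, hT⟩ := eventually_atTop.1 h1
    obtain ⟨M, hM⟩ := hbdd (max T 1)
    refine ⟨max M 1, le_max_right _ _, fun t ht => ?_⟩
    rcases le_or_gt t (max T 1) with h | h
    · have h1 : κ t ≤ M := hM t ⟨ht, h⟩
      have h2 : (0:ℝ) ≤ t / (n + 1) := by positivity
      have h3 : M ≤ max M 1 := le_max_left _ _
      linarith
    · have ht1 : (1:ℝ) < t := lt_of_le_of_lt (le_max_right T 1) h
      have htpos : (0:ℝ) < t := by linarith
      have h4 := hT t (le_trans (le_max_left T 1) h.le)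
      have h5 : κ t < 1 / ((n:ℝ) + 1) * t := (div_lt_iff₀ htpos).1 h4
      have h6 : 1 / ((n:ℝ) + 1) * t = t / (n + 1) := by ring
      have h7 : (1:ℝ) ≤ max M 1 := le_max_right _ _
      nlinarith
  choose A hA1 hA2 using hA
  set f : ℕ → ℝ → ℝ := fun n t => A n + t / (n + 1) with hf
  set g : ℝ → ℝ := fun t => ⨅ n, f n t with hg
  have hfpos : ∀ n t, 0 ≤ t → 1 ≤ f n t := by
    intro n t ht
    have := hA1 n
    have h2 : (0:ℝ) ≤ t / (n + 1) := by positivity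
    simp only [hf]; linarith
  have hbb : ∀ t, 0 ≤ t → BddBelow (Set.range fun n => f n t) := by
    intro t ht
    exact ⟨1, by rintro x ⟨n, rfl⟩; exact hfpos n t ht⟩
  have hle : ∀ n t, 0 ≤ t → g t ≤ f n t := fun n t ht => ciInf_le (hbb t ht) n
  refine ⟨g, ?_, ?_, ?_, ?_, ?_⟩
  · -- monotone
    intro x hx y hy hxy
    refine le_ciInf fun n => ?_
    refine le_trans (hle n x hx) ?_
    simp only [hf]
    gcongr
  · -- concave
    refine ⟨convex_Ici 0, fun x hx y hy a b ha hb hab => ?_⟩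
    have hx' : (0:ℝ) ≤ x := hx
    have hy' : (0:ℝ) ≤ y := hy
    have hxy : (0:ℝ) ≤ a * x + b * y := by positivity
    refine le_ciInf fun n => ?_
    have h1 : g x ≤ f n x := hle n x hx'
    have h2 : g y ≤ f n y := hle n y hy'
    have heq : f n (a * x + b * y) = a * f n x + b * f n y := by
      have hb' : b = 1 - a := by linarith
      subst hb'
      simp only [hf]
      field_simp
      ring
    simp only [smul_eq_mul]
    calc a * g x + b * g y ≤ a * f n x + b * f n y := by
          have := mul_le_mul_of_nonneg_left h1 ha
          have := mul_le_mul_of_nonneg_left h2 hb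
          linarith
      _ = f n (a * x + b * y) := heq.symm
  · -- ≥ 1
    intro t ht
    exact le_ciInf fun n => hfpos n t ht
  · -- majorant
    intro t ht
    exact le_ciInf fun n => hA2 n t ht
  · -- sublinear
    rw [Metric.tendsto_nhds]
    intro ε hε
    set n : ℕ := ⌈2 / ε⌉₊ with hn
    have hn1 : 2 / ε ≤ (n:ℝ) := Nat.le_ceil _
    have hinv : 1 / ((n:ℝ) + 1) ≤ ε / 2 := by
      rw [div_le_div_iff₀ (by positivity) (by norm_num)]
      have h2 : 2 ≤ (n:ℝ) * ε := (div_le_iff₀ hε).1 hn1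
      nlinarith
    have hApos : (0:ℝ) < A n := lt_of_lt_of_le one_pos (hA1 n)
    filter_upwards [eventually_ge_atTop (max 1 (4 * A n / ε))] with t ht
    have ht1 : (1:ℝ) ≤ t := le_trans (le_max_left _ _) ht
    have htpos : (0:ℝ) < t := by linarith
    have ht2 : 4 * A n / ε ≤ t := le_trans (le_max_right _ _) ht
    have hA5 : A n / t ≤ ε / 4 := by
      rw [div_le_div_iff₀ htpos (by norm_num)]
      have := (div_le_iff₀ hε).1 ht2
      nlinarith
    have hup : g t / t ≤ A n / t + 1 / (n + 1) := by
      have h1 : g t ≤ f n t := hle n t (by linarith)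
      have h2 : f n t / t = A n / t + 1 / (n + 1) := by
        simp only [hf]
        rw [add_div, div_right_comm, div_self htpos.ne']
      rw [← h2]
      gcongr
    have hlow : 0 ≤ g t / t := by
      have : (1:ℝ) ≤ g t := le_ciInf fun m => hfpos m t (by linarith)
      positivity
    rw [Real.dist_eq, sub_zero, abs_of_nonneg hlow]
    calc g t / t ≤ A n / t + 1 / (n + 1) := hup
      _ ≤ ε / 4 + ε / 2 := by linarith
      _ < ε := by linarith
end

section
/- Let G be a countable group acting by homeomorphisms on a compact Hausdorff topological space B such that the action is minimal (every G-orbit is dense in B) and every G-orbit is infinite. Let μ be a probability measure on G whose support generates G as a semigroup, and let ν be a μ-stationary Borel probability measure on B. Then ν has no atoms and the support of ν is all of B. -/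
open MeasureTheory

/-- If a weighted average (with finite total) of values bounded by `c` equals the
weighted average of the constant `c`, then every value with nonzero weight equals `c`. -/
lemma tsum_force_eq {ι : Type*} [Countable ι] {w f : ι → ENNReal} {c : ENNReal}
    (hf : ∀ i, f i ≤ c)
    (heq : (∑' i, w i * f i) = ∑' i, w i * c)
    (hfin : (∑' i, w i * c) ≠ ⊤) :
    ∀ i, w i ≠ 0 → f i = c := by
  have hsplit : ∀ i, w i * c = w i * f i + w i * (c - f i) := by
    intro i
    rw [← mul_add, add_tsub_cancel_of_le (hf i)]
  have hsum : (∑' i, w i * c) = (∑' i, w i * f i) + ∑' i, w i * (c - f i) := by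
    calc (∑' i, w i * c) = ∑' i, (w i * f i + w i * (c - f i)) := by
          exact tsum_congr hsplit
      _ = (∑' i, w i * f i) + ∑' i, w i * (c - f i) := ENNReal.tsum_add
  have hzero : (∑' i, w i * (c - f i)) = 0 := by
    have h1 : (∑' i, w i * f i) + ∑' i, w i * (c - f i)
        = (∑' i, w i * f i) + 0 := by
      rw [add_zero, ← hsum, heq]
    have hne : (∑' i, w i * f i) ≠ ⊤ := by rw [heq]; exact hfin
    exact (ENNReal.add_right_inj hne).mp h1
  intro i hi
  have hterm : w i * (c - f i) = 0 :=
    (ENNReal.tsum_eq_zero.mp hzero) i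
  rcases mul_eq_zero.mp hterm with h | h
  · exact absurd h hi
  · exact le_antisymm (hf i) (tsub_eq_zero_iff_le.mp h)

/-- For a minimal continuous action with infinite orbits of a countable
group `G` on a compact Hausdorff space `B`, and a probability measure `μ` on `G` whose
support generates `G` as a semigroup, any `μ`-stationary Borel probability measure `ν` on
`B` has no atoms and has full support. -/
theorem stationary_measure_nonatomic_full_support
    {G B : Type*} [Group G] [Countable G] [MeasurableSpace G] [DiscreteMeasurableSpace G]
    [TopologicalSpace B] [CompactSpace B] [T2Space B]
    [MeasurableSpace B] [BorelSpace B] [MulAction G B]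
    (hcont : ∀ g : G, Continuous (fun b : B => g • b))
    (hmin : ∀ b : B, Dense (MulAction.orbit G b))
    (hinf : ∀ b : B, (MulAction.orbit G b).Infinite)
    (μ : Measure G) [IsProbabilityMeasure μ]
    (hgen : ∀ g : G, g ∈ Subsemigroup.closure {g' : G | μ {g'} ≠ 0})
    (ν : Measure B) [IsProbabilityMeasure ν]
    (hstat : ∀ A : Set B, MeasurableSet A →
      ν A = ∑' g : G, μ {g} * ν ((fun b : B => g • b) ⁻¹' A)) :
    (∀ b : B, ν {b} = 0) ∧ ∀ U : Set B, IsOpen U → U.Nonempty → 0 < ν U := by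
  -- total mass of μ as a sum over singletons
  have hμsum : (∑' g : G, μ {g}) = 1 := by
    have h1 : (⋃ g : G, ({g} : Set G)) = Set.univ := Set.iUnion_of_singleton G
    have h2 := measure_iUnion (μ := μ)
      (fun g g' hgg' => by simpa [Set.disjoint_singleton] using hgg')
      (fun g : G => MeasurableSet.singleton g)
    rw [h1] at h2
    rw [← h2, measure_univ]
  have hpre_singleton : ∀ (g : G) (a : B),
      ((fun b : B => g • b) ⁻¹' {a}) = {g⁻¹ • a} := by
    intro g a
    ext b
    simp [eq_comm, eq_inv_smul_iff]
  constructor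
  · -- no atoms
    by_contra h
    push_neg at h
    obtain ⟨b₁, hb₁⟩ := h
    set m : ENNReal := ⨆ b : B, ν {b} with hm
    have hm_le : ∀ b : B, ν {b} ≤ m := fun b => le_iSup (fun b : B => ν {b}) b
    have hm_pos : 0 < m := lt_of_lt_of_le (pos_iff_ne_zero.mpr hb₁) (hm_le b₁)
    have hm_le_one : m ≤ 1 := iSup_le fun b => prob_le_one
    have hm_ne_top : m ≠ ⊤ := ne_top_of_le_ne_top ENNReal.one_ne_top hm_le_one
    have hhalf : m / 2 < m := ENNReal.half_lt_self hm_pos.ne' hm_ne_top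
    -- the set of points with big measure is finite
    have hT : Set.Finite {b : B | m / 2 ≤ ν {b}} := by
      have := Measure.finite_const_le_meas_of_disjoint_iUnion ν
        (ε := m / 2) (ENNReal.half_pos hm_pos.ne')
        (As := fun b : B => {b})
        (fun b => measurableSet_singleton b)
        (fun b b' hbb' => by simpa [Function.onFun, Set.disjoint_singleton] using hbb')
        (by exact measure_ne_top ν _)
      exact this
    have hTne : {b : B | m / 2 ≤ ν {b}}.Nonempty := by
      obtain ⟨b, hb⟩ := lt_iSup_iff.mp hhalf
      exact ⟨b, hb.le⟩
    obtain ⟨b₀, hb₀T, hb₀max⟩ :=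
      Set.exists_max_image {b : B | m / 2 ≤ ν {b}} (fun b => ν {b}) hT hTne
    have hb₀ : ν {b₀} = m := by
      refine le_antisymm (hm_le b₀) (iSup_le fun b => ?_)
      by_cases hb : m / 2 ≤ ν {b}
      · exact hb₀max b hb
      · exact le_trans (le_of_not_ge hb) hb₀T
    -- stationarity forces the max to propagate along supp μ
    have hstep : ∀ a : B, ν {a} = m → ∀ g : G, μ {g} ≠ 0 → ν {g⁻¹ • a} = m := by
      intro a ha
      have hsa := hstat {a} (measurableSet_singleton a)
      have hsa' : (∑' g : G, μ {g} * ν {g⁻¹ • a}) = ∑' g : G, μ {g} * m := by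
        rw [ENNReal.tsum_mul_right, hμsum, one_mul, ← ha, hsa]
        exact tsum_congr fun g => by rw [hpre_singleton g a]
      have hfin : (∑' g : G, μ {g} * m) ≠ ⊤ := by
        rw [ENNReal.tsum_mul_right, hμsum, one_mul]; exact hm_ne_top
      exact tsum_force_eq (fun g => hm_le _) hsa' hfin
    -- propagate along the semigroup generated by supp μ
    have hprop : ∀ g : G, ∀ a : B, ν {a} = m → ν {g⁻¹ • a} = m := by
      intro g
      refine Subsemigroup.closure_induction
        (p := fun x _ => ∀ a : B, ν {a} = m → ν {x⁻¹ • a} = m)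
        (fun x hx a ha => hstep a ha x hx)
        (fun x y _ _ hx hy a ha => by
          have : (x * y)⁻¹ • a = y⁻¹ • (x⁻¹ • a) := by
            rw [mul_inv_rev, mul_smul]
          rw [this]
          exact hy _ (hx a ha)) (hgen g)
    -- the orbit of b₀ consists of atoms of measure m, hence is infinite with infinite measure
    have horb : ∀ x ∈ MulAction.orbit G b₀, m ≤ ν {x} := by
      rintro x ⟨g, rfl⟩
      have := hprop g⁻¹ b₀ hb₀
      rw [inv_inv] at this
      exact this.ge
    have := (hinf b₀).meas_eq_top (μ := ν) ⟨m, hm_pos.ne', horb⟩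
    exact measure_ne_top ν _ this
  · -- full support
    intro U hU hUne
    by_contra h
    push_neg at h
    have hU0 : ν U = 0 := le_antisymm (le_of_not_gt (by simpa using h)) zero_le
    -- null-ness propagates: ν ((a*g) • ·)⁻¹' U = 0 whenever ν ((a • ·)⁻¹' U) = 0
    have hstep : ∀ a : B, True := fun _ => trivial
    have hprop : ∀ g : G, ∀ a : G,
        ν ((fun b : B => a • b) ⁻¹' U) = 0 →
        ν ((fun b : B => (a * g) • b) ⁻¹' U) = 0 := by
      intro g
      refine Subsemigroup.closure_induction
        (p := fun x _ => ∀ a : G, ν ((fun b : B => a • b) ⁻¹' U) = 0 →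
          ν ((fun b : B => (a * x) • b) ⁻¹' U) = 0)
        (fun x hx a ha => ?_)
        (fun x y _ _ hx hy a ha => by
          have : a * (x * y) = (a * x) * y := (mul_assoc a x y).symm
          rw [this]
          exact hy _ (hx a ha)) (hgen g)
      -- base case: stationarity applied to the open set (a • ·)⁻¹' U
      have hmeas : MeasurableSet ((fun b : B => a • b) ⁻¹' U) :=
        (hU.preimage (hcont a)).measurableSet
      have hs := hstat _ hmeas
      rw [ha] at hs
      have hterm : μ {x} * ν ((fun b : B => x • b) ⁻¹' ((fun b : B => a • b) ⁻¹' U)) = 0 :=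
        (ENNReal.tsum_eq_zero.mp hs.symm) x
      have hν0 : ν ((fun b : B => x • b) ⁻¹' ((fun b : B => a • b) ⁻¹' U)) = 0 := by
        rcases mul_eq_zero.mp hterm with h' | h'
        · exact absurd h' hx
        · exact h'
      have hset : ((fun b : B => x • b) ⁻¹' ((fun b : B => a • b) ⁻¹' U))
          = (fun b : B => (a * x) • b) ⁻¹' U := by
        ext b; simp [mul_smul]
      rwa [hset] at hν0
    have hall : ∀ g : G, ν ((fun b : B => g • b) ⁻¹' U) = 0 := by
      intro g
      have h1 : ν ((fun b : B => (1 : G) • b) ⁻¹' U) = 0 := by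
        simpa using hU0
      have := hprop g 1 h1
      simpa using this
    -- minimality: the translates of U cover B
    have hcover : (Set.univ : Set B) ⊆ ⋃ g : G, (fun b : B => g • b) ⁻¹' U := by
      intro b _
      obtain ⟨x, hxorb, hxU⟩ := (hmin b).exists_mem_open hU hUne
      obtain ⟨g, rfl⟩ := hxorb
      exact Set.mem_iUnion.mpr ⟨g, hxU⟩
    have : ν (Set.univ : Set B) = 0 :=
      measure_mono_null hcover (measure_iUnion_null hall)
    rw [measure_univ] at this
    exact one_ne_zero this
end
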